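/- arXiv:0808.3522 — 2 statements merged into one kernel-verified Lean document; each statement's English description precedes it below -/
import Mathlib

section
/- Under the sign-change isomorphism θ : H(W,S,φ) → H(W,S,φ') (sending T_w^φ to (−1)^{ℓ₋(w)}T_w^{φ'}), the Kazhdan–Lusztig basis elements satisfy θ(C_w^φ) = (−1)^{ℓ₋(w)} C_w^{φ'} for all w ∈ W. Consequently, for each ? ∈ {L,R,LR}, the preorders ≤_?^φ and ≤_?^{φ'} coincide and the equivalence relations ∼_?^φ and ∼_?^{φ'} coincide, so the partitions of W into left, right, and two-sided cells for φ and φ' are the same. -/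
open Finsupp

noncomputable section

def expG {Γ : Type*} [AddCommGroup Γ] (γ : Γ) : AddMonoidAlgebra ℤ Γ :=
  AddMonoidAlgebra.single γ 1

structure IsHeckeAlgebra {B W Γ : Type*} [Group W] [AddCommGroup Γ]
    {M : CoxeterMatrix B} (cs : CoxeterSystem M W) (φ : B → Γ)
    {A : Type*} [Ring A] [Algebra (AddMonoidAlgebra ℤ Γ) A]
    (T : Module.Basis W (AddMonoidAlgebra ℤ Γ) A) : Prop where
  one : T 1 = 1
  mul_of_length_add : ∀ w w' : W,
    cs.length (w * w') = cs.length w + cs.length w' → T w * T w' = T (w * w')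
  quadratic : ∀ i : B,
    (T (cs.simple i) - algebraMap (AddMonoidAlgebra ℤ Γ) A (expG (φ i))) *
      (T (cs.simple i) + algebraMap (AddMonoidAlgebra ℤ Γ) A (expG (-φ i))) = 0

/-- `H_{<0}`: elements whose `T`-coefficients are supported on `Γ_{<0}`. -/
def heckeNeg {W Γ : Type*} [AddCommGroup Γ] [LinearOrder Γ] [IsOrderedAddMonoid Γ] {A : Type*} [Ring A]
    [Algebra (AddMonoidAlgebra ℤ Γ) A] (T : Module.Basis W (AddMonoidAlgebra ℤ Γ) A) :
    Set A :=
  {h | ∀ (w : W) (γ : Γ), (T.repr h w).coeff γ ≠ 0 → γ < 0}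

section Cells

variable {W Γ : Type*} [AddCommGroup Γ] [LinearOrder Γ] [IsOrderedAddMonoid Γ] {A : Type*} [Ring A]
  [Algebra (AddMonoidAlgebra ℤ Γ) A]

/-- `x ←_L y` : `C_x` occurs in `h C_y` for some `h`. -/
def heckeStepL (bC : Module.Basis W (AddMonoidAlgebra ℤ Γ) A) (x y : W) : Prop :=
  ∃ h : A, bC.repr (h * bC y) x ≠ 0

def heckeStepR (bC : Module.Basis W (AddMonoidAlgebra ℤ Γ) A) (x y : W) : Prop :=
  ∃ h : A, bC.repr (bC y * h) x ≠ 0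

def heckeStepLR (bC : Module.Basis W (AddMonoidAlgebra ℤ Γ) A) (x y : W) : Prop :=
  ∃ h : A, bC.repr (h * bC y) x ≠ 0 ∨ bC.repr (bC y * h) x ≠ 0

/-- The Kazhdan–Lusztig left preorder `≤_L`. -/
def heckeLeL (bC : Module.Basis W (AddMonoidAlgebra ℤ Γ) A) : W → W → Prop :=
  Relation.ReflTransGen (heckeStepL bC)

def heckeLeR (bC : Module.Basis W (AddMonoidAlgebra ℤ Γ) A) : W → W → Prop :=
  Relation.ReflTransGen (heckeStepR bC)

def heckeLeLR (bC : Module.Basis W (AddMonoidAlgebra ℤ Γ) A) : W → W → Prop :=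
  Relation.ReflTransGen (heckeStepLR bC)

/-- The equivalence relation `∼_L`. -/
def heckeSimL (bC : Module.Basis W (AddMonoidAlgebra ℤ Γ) A) (x y : W) : Prop :=
  heckeLeL bC x y ∧ heckeLeL bC y x

def heckeSimR (bC : Module.Basis W (AddMonoidAlgebra ℤ Γ) A) (x y : W) : Prop :=
  heckeLeR bC x y ∧ heckeLeR bC y x

def heckeSimLR (bC : Module.Basis W (AddMonoidAlgebra ℤ Γ) A) (x y : W) : Prop :=
  heckeLeLR bC x y ∧ heckeLeLR bC y x

end Cells

lemma negOnePow_smul_smul {M : Type*} [AddCommGroup M] (n : ℕ) (x : M) :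
    ((-1:ℤ)^n) • ((-1:ℤ)^n) • x = x := by
  rw [smul_smul, ← pow_add, Even.neg_one_pow ⟨n, rfl⟩, one_smul]

lemma negOnePow_smul_eq_zero_iff {M : Type*} [AddCommGroup M] (n : ℕ) (x : M) :
    ((-1:ℤ)^n • x = 0) ↔ x = 0 := by
  constructor
  · intro h
    have := congrArg (fun y => ((-1:ℤ)^n) • y) h
    simpa [negOnePow_smul_smul] using this
  · rintro rfl; exact smul_zero _

open Classical in
/-- Under the sign-change isomorphism `θ` one has `θ(C_w^φ) = (−1)^{ℓ₋(w)} C_w^{φ'}`,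
and consequently the Kazhdan–Lusztig preorders `≤_?` and equivalence relations `∼_?`
(for `? ∈ {L,R,LR}`) for `φ` and `φ'` coincide. -/
theorem stmt11 {B W Γ : Type*} [Group W] [AddCommGroup Γ] [LinearOrder Γ] [IsOrderedAddMonoid Γ]
    {M : CoxeterMatrix B} (cs : CoxeterSystem M W)
    (P : B → Prop)
    (hsep : ∀ i j : B, P i → ¬ P j → ¬ IsConj (cs.simple i) (cs.simple j))
    (φ φ' : B → Γ)
    (hφconj : ∀ i j : B, IsConj (cs.simple i) (cs.simple j) → φ i = φ j)
    (hφ' : ∀ i : B, φ' i = if P i then φ i else -φ i)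
    (ℓm : W → ℕ)
    (hℓm : ∀ (w : W) (l : List B), cs.wordProd l = w → cs.IsReduced l →
      ℓm w = (l.filter (fun i => decide (¬ P i))).length)
    {A A' : Type*} [Ring A] [Algebra (AddMonoidAlgebra ℤ Γ) A]
    [Ring A'] [Algebra (AddMonoidAlgebra ℤ Γ) A']
    (T : Module.Basis W (AddMonoidAlgebra ℤ Γ) A) (T' : Module.Basis W (AddMonoidAlgebra ℤ Γ) A')
    (hA : IsHeckeAlgebra cs φ T) (hA' : IsHeckeAlgebra cs φ' T')
    (θ : A →ₗ[AddMonoidAlgebra ℤ Γ] A')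
    (hθ : ∀ w : W, θ (T w) = ((-1 : ℤ) ^ ℓm w) • T' w)
    (hθmul : ∀ x y : A, θ (x * y) = θ x * θ y) (hθbij : Function.Bijective θ)
    (bar : A →+ A) (bar' : A' →+ A')
    (hθbar : ∀ a : A, θ (bar a) = bar' (θ a))
    (hθneg : θ '' heckeNeg T = heckeNeg T')
    (bC : Module.Basis W (AddMonoidAlgebra ℤ Γ) A) (bC' : Module.Basis W (AddMonoidAlgebra ℤ Γ) A')
    (hC : ∀ w : W, bar (bC w) = bC w ∧ bC w - T w ∈ heckeNeg T)
    (hCuniq : ∀ (w : W) (h : A), bar h = h → h - T w ∈ heckeNeg T → h = bC w)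
    (hC' : ∀ w : W, bar' (bC' w) = bC' w ∧ bC' w - T' w ∈ heckeNeg T')
    (hC'uniq : ∀ (w : W) (h : A'), bar' h = h → h - T' w ∈ heckeNeg T' → h = bC' w) :
    (∀ w : W, θ (bC w) = ((-1 : ℤ) ^ ℓm w) • bC' w) ∧
    (∀ x y : W, heckeLeL bC x y ↔ heckeLeL bC' x y) ∧
    (∀ x y : W, heckeLeR bC x y ↔ heckeLeR bC' x y) ∧
    (∀ x y : W, heckeLeLR bC x y ↔ heckeLeLR bC' x y) ∧
    (∀ x y : W, heckeSimL bC x y ↔ heckeSimL bC' x y) ∧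
    (∀ x y : W, heckeSimR bC x y ↔ heckeSimR bC' x y) ∧
    (∀ x y : W, heckeSimLR bC x y ↔ heckeSimLR bC' x y) := by
  set R := AddMonoidAlgebra ℤ Γ
  set ε : W → ℤ := fun w => (-1:ℤ)^(ℓm w) with hε
  -- heckeNeg T' is closed under sign scaling
  have hnegsmul : ∀ (n : ℕ) (h : A'), h ∈ heckeNeg T' → ((-1:ℤ)^n) • h ∈ heckeNeg T' := by
    intro n h hh w γ hne
    apply hh w γ
    intro h0
    apply hne
    rw [map_zsmul, Finsupp.smul_apply, AddMonoidAlgebra.coeff_smul_apply, h0, smul_zero]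
  -- Part 1 : θ (bC w) = ε w • bC' w
  have part1 : ∀ w : W, θ (bC w) = (ε w) • bC' w := by
    intro w
    have hbar : bar' ((ε w) • θ (bC w)) = (ε w) • θ (bC w) := by
      rw [AddMonoidHom.map_zsmul, ← hθbar, (hC w).1]
    have hneg : (ε w) • θ (bC w) - T' w ∈ heckeNeg T' := by
      have h1 : (ε w) • θ (bC w) - T' w = (ε w) • (θ (bC w) - (ε w) • T' w) := by
        rw [smul_sub, negOnePow_smul_smul]
      have h2 : θ (bC w) - (ε w) • T' w = θ (bC w - T w) := by
        rw [map_sub, hθ w]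
      rw [h1, h2]
      have : θ (bC w - T w) ∈ heckeNeg T' := by
        rw [← hθneg]; exact Set.mem_image_of_mem θ (hC w).2
      exact hnegsmul _ _ this
    have := hC'uniq w ((ε w) • θ (bC w)) hbar hneg
    calc θ (bC w) = (ε w) • ((ε w) • θ (bC w)) := (negOnePow_smul_smul _ _).symm
    _ = (ε w) • bC' w := by rw [this]
  -- Key repr lemma
  have key : ∀ (a : A) (x : W), bC'.repr (θ a) x = (ε x) • bC.repr a x := by
    intro a x
    let L1 : A →ₗ[R] R := (Finsupp.lapply x) ∘ₗ (bC'.repr.toLinearMap ∘ₗ θ)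
    let L2 : A →ₗ[R] R := (ε x) • ((Finsupp.lapply x) ∘ₗ bC.repr.toLinearMap)
    have hL : L1 = L2 := by
      apply Module.Basis.ext bC
      intro w
      show bC'.repr (θ (bC w)) x = (ε x) • bC.repr (bC w) x
      rw [part1 w, map_zsmul, bC'.repr_self, bC.repr_self, Finsupp.smul_apply,
        Finsupp.single_apply]
      by_cases h : w = x
      · subst h; simp
      · simp [h]
    have := LinearMap.congr_fun hL a
    simpa [L1, L2] using this
  have keyne : ∀ (a : A) (x : W), bC.repr a x ≠ 0 ↔ bC'.repr (θ a) x ≠ 0 := by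
    intro a x
    rw [key a x, not_iff_not]
    exact (negOnePow_smul_eq_zero_iff _ _).symm
  -- products
  have keyL : ∀ (h : A) (y x : W),
      bC.repr (h * bC y) x ≠ 0 ↔ bC'.repr (θ h * bC' y) x ≠ 0 := by
    intro h y x
    rw [keyne (h * bC y) x, hθmul, part1 y, mul_smul_comm, map_zsmul, Finsupp.smul_apply,
      ne_eq, negOnePow_smul_eq_zero_iff]
  have keyR : ∀ (h : A) (y x : W),
      bC.repr (bC y * h) x ≠ 0 ↔ bC'.repr (bC' y * θ h) x ≠ 0 := by
    intro h y x
    rw [keyne (bC y * h) x, hθmul, part1 y, smul_mul_assoc, map_zsmul, Finsupp.smul_apply,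
      ne_eq, negOnePow_smul_eq_zero_iff]
  -- step relations coincide
  have stepL : heckeStepL bC = heckeStepL bC' := by
    funext x y
    apply propext
    constructor
    · rintro ⟨h, hh⟩; exact ⟨θ h, (keyL h y x).1 hh⟩
    · rintro ⟨h', hh'⟩
      obtain ⟨h, rfl⟩ := hθbij.2 h'
      exact ⟨h, (keyL h y x).2 hh'⟩
  have stepR : heckeStepR bC = heckeStepR bC' := by
    funext x y
    apply propext
    constructor
    · rintro ⟨h, hh⟩; exact ⟨θ h, (keyR h y x).1 hh⟩
    · rintro ⟨h', hh'⟩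
      obtain ⟨h, rfl⟩ := hθbij.2 h'
      exact ⟨h, (keyR h y x).2 hh'⟩
  have stepLR : heckeStepLR bC = heckeStepLR bC' := by
    funext x y
    apply propext
    constructor
    · rintro ⟨h, hh⟩
      exact ⟨θ h, hh.imp (fun a => (keyL h y x).1 a) (fun a => (keyR h y x).1 a)⟩
    · rintro ⟨h', hh'⟩
      obtain ⟨h, rfl⟩ := hθbij.2 h'
      exact ⟨h, hh'.imp (fun a => (keyL h y x).2 a) (fun a => (keyR h y x).2 a)⟩
  have leL : heckeLeL bC = heckeLeL bC' := by unfold heckeLeL; rw [stepL]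
  have leR : heckeLeR bC = heckeLeR bC' := by unfold heckeLeR; rw [stepR]
  have leLR : heckeLeLR bC = heckeLeLR bC' := by unfold heckeLeLR; rw [stepLR]
  refine ⟨part1, fun x y => by rw [leL], fun x y => by rw [leR], fun x y => by rw [leLR],
    fun x y => by unfold heckeSimL; rw [leL], fun x y => by unfold heckeSimR; rw [leR],
    fun x y => by unfold heckeSimLR; rw [leLR]⟩
end
end

section
/- Let (W,S) be a Coxeter system, S = I ∪ J a partition with no element of I conjugate to an element of J, and φ a weight function with φ(I) = {0}. Then for x ∈ W_I (the standard parabolic subgroup generated by I) and w ∈ W: C_x^φ = T_x^φ, C_{xw}^φ = T_x^φ C_w^φ, and C_{wx}^φ = C_w^φ T_x^φ, where C denotes Kazhdan–Lusztig basis elements. -/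
open Finsupp

noncomputable section

/-- If `S = I ∪ J` with no conjugacy between the parts and `φ(I) = {0}`, then for
`x ∈ W_I` and `w ∈ W` the Kazhdan–Lusztig elements satisfy `C_x = T_x`,
`C_{xw} = T_x C_w` and `C_{wx} = C_w T_x`. -/
theorem stmt13 {B W Γ : Type*} [Group W] [AddCommGroup Γ] [LinearOrder Γ] [IsOrderedAddMonoid Γ]
    {M : CoxeterMatrix B} (cs : CoxeterSystem M W)
    (P : B → Prop)
    (hsep : ∀ i j : B, P i → ¬ P j → ¬ IsConj (cs.simple i) (cs.simple j))
    (φ : B → Γ)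
    (hφconj : ∀ i j : B, IsConj (cs.simple i) (cs.simple j) → φ i = φ j)
    (hφI : ∀ i : B, P i → φ i = 0)
    {A : Type*} [Ring A] [Algebra (AddMonoidAlgebra ℤ Γ) A]
    (T : Module.Basis W (AddMonoidAlgebra ℤ Γ) A) (hA : IsHeckeAlgebra cs φ T)
    (bar : A →+ A)
    (hbarmul : ∀ a b : A, bar (a * b) = bar a * bar b)
    (hbarT : ∀ w : W, bar (T w) * T w⁻¹ = 1)
    (hbarsmul : ∀ (γ : Γ) (a : A), bar (expG γ • a) = expG (-γ) • bar a)
    (C : W → A)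
    (hC : ∀ w : W, bar (C w) = C w ∧ C w - T w ∈ heckeNeg T)
    (hCuniq : ∀ (w : W) (h : A), bar h = h → h - T w ∈ heckeNeg T → h = C w) :
    ∀ x ∈ Subgroup.closure (cs.simple '' {i : B | P i}), ∀ w : W,
      C x = T x ∧ C (x * w) = T x * C w ∧ C (w * x) = C w * T x := by
  classical
  -- the `T`-multiplicativity and bar-invariance property for elements of the parabolic
  have key : ∀ x ∈ Subgroup.closure (cs.simple '' {i : B | P i}),
      bar (T x) = T x ∧ (∀ w : W, T x * T w = T (x * w)) ∧
        (∀ w : W, T w * T x = T (w * x)) := by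
    intro x hx
    induction hx using Subgroup.closure_induction with
    | mem s hs =>
      obtain ⟨i, hPi, rfl⟩ := hs
      -- T s * T s = 1
      have hquad := hA.quadratic i
      rw [hφI i hPi, neg_zero] at hquad
      have e1 : expG (0 : Γ) = 1 := by
        simp [expG, AddMonoidAlgebra.one_def]
      rw [e1, map_one] at hquad
      have h2 : T (cs.simple i) * T (cs.simple i) = 1 := by
        have h := hquad
        rw [sub_mul, mul_add, one_mul, mul_one] at h
        have h' : T (cs.simple i) * T (cs.simple i) - 1 = 0 := by
          rw [← h]; abel
        have := sub_eq_zero.mp h'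
        simpa using this
      have hl : ∀ w : W, T (cs.simple i) * T w = T (cs.simple i * w) := by
        intro w
        rcases cs.length_simple_mul w i with h | h
        · exact hA.mul_of_length_add _ w (by rw [cs.length_simple]; omega)
        · have e : T (cs.simple i) * T (cs.simple i * w) = T w := by
            have := hA.mul_of_length_add (cs.simple i) (cs.simple i * w)
              (by rw [cs.length_simple, ← mul_assoc, cs.simple_mul_simple_self, one_mul]; omega)
            rwa [← mul_assoc, cs.simple_mul_simple_self, one_mul] at this
          rw [← e, ← mul_assoc, h2, one_mul]
      have hr : ∀ w : W, T w * T (cs.simple i) = T (w * cs.simple i) := by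
        intro w
        rcases cs.length_mul_simple w i with h | h
        · exact hA.mul_of_length_add w _ (by rw [cs.length_simple]; omega)
        · have e : T (w * cs.simple i) * T (cs.simple i) = T w := by
            have := hA.mul_of_length_add (w * cs.simple i) (cs.simple i)
              (by rw [cs.length_simple, mul_assoc, cs.simple_mul_simple_self, mul_one]; omega)
            rwa [mul_assoc, cs.simple_mul_simple_self, mul_one] at this
          rw [← e, mul_assoc, h2, mul_one]
      have hb : bar (T (cs.simple i)) = T (cs.simple i) := by
        have h3 := hbarT (cs.simple i)
        rw [cs.inv_simple] at h3
        calc bar (T (cs.simple i))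
            = bar (T (cs.simple i)) * (T (cs.simple i) * T (cs.simple i)) := by
              rw [h2, mul_one]
          _ = bar (T (cs.simple i)) * T (cs.simple i) * T (cs.simple i) := by
              rw [mul_assoc]
          _ = T (cs.simple i) := by rw [h3, one_mul]
      exact ⟨hb, hl, hr⟩
    | one =>
      have hb1 : bar (1 : A) = 1 := by
        have := hbarT (1 : W)
        rwa [hA.one, inv_one, hA.one, mul_one] at this
      refine ⟨by rw [hA.one, hb1], ?_, ?_⟩ <;>
        intro w <;> simp [hA.one]
    | mul x y _ _ ihx ihy =>
      obtain ⟨hbx, hlx, hrx⟩ := ihx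
      obtain ⟨hby, hly, hry⟩ := ihy
      refine ⟨?_, ?_, ?_⟩
      · rw [← hlx y, hbarmul, hbx, hby, hlx y]
      · intro w
        rw [← hlx y, mul_assoc, hly w, hlx (y * w), mul_assoc]
      · intro w
        rw [← hlx y, ← mul_assoc, hrx w, hry (w * x), mul_assoc]
    | inv x _ ih =>
      obtain ⟨hbx, hlx, hrx⟩ := ih
      have hinvl : T x⁻¹ * T x = 1 := by
        rw [hrx x⁻¹, inv_mul_cancel, hA.one]
      have hinvr : T x * T x⁻¹ = 1 := by
        rw [hlx x⁻¹, mul_inv_cancel, hA.one]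
      have hl : ∀ w : W, T x⁻¹ * T w = T (x⁻¹ * w) := by
        intro w
        have : T w = T x * T (x⁻¹ * w) := by rw [hlx (x⁻¹ * w), mul_inv_cancel_left]
        rw [this, ← mul_assoc, hinvl, one_mul]
      have hr : ∀ w : W, T w * T x⁻¹ = T (w * x⁻¹) := by
        intro w
        have : T w = T (w * x⁻¹) * T x := by rw [hrx (w * x⁻¹), inv_mul_cancel_right]
        rw [this, mul_assoc, hinvr, mul_one]
      have hb : bar (T x⁻¹) = T x⁻¹ := by
        have h3 := hbarT x⁻¹
        rw [inv_inv] at h3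
        calc bar (T x⁻¹) = bar (T x⁻¹) * (T x * T x⁻¹) := by rw [hinvr, mul_one]
          _ = bar (T x⁻¹) * T x * T x⁻¹ := by rw [mul_assoc]
          _ = T x⁻¹ := by rw [h3, one_mul]
      exact ⟨hb, hl, hr⟩
  -- heckeNeg is stable under multiplication by T x on either side
  have negL : ∀ x : W, (∀ w : W, T x * T w = T (x * w)) →
      ∀ h ∈ heckeNeg T, T x * h ∈ heckeNeg T := by
    intro x hlx h hh
    have hL : (T.repr.toLinearMap ∘ₗ LinearMap.mulLeft (AddMonoidAlgebra ℤ Γ) (T x))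
        = Finsupp.lmapDomain (AddMonoidAlgebra ℤ Γ) (AddMonoidAlgebra ℤ Γ) (x * ·)
            ∘ₗ T.repr.toLinearMap := by
      apply T.ext
      intro w
      simp [LinearMap.mulLeft_apply, hlx w, Finsupp.mapDomain_single]
    have hrepr : T.repr (T x * h) = Finsupp.mapDomain (x * ·) (T.repr h) :=
      DFunLike.congr_fun hL h
    intro v γ hγ
    have hv : v = x * (x⁻¹ * v) := by group
    rw [hrepr, hv, Finsupp.mapDomain_apply (mul_right_injective x)] at hγ
    exact hh _ _ hγ
  have negR : ∀ x : W, (∀ w : W, T w * T x = T (w * x)) →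
      ∀ h ∈ heckeNeg T, h * T x ∈ heckeNeg T := by
    intro x hrx h hh
    have hL : (T.repr.toLinearMap ∘ₗ LinearMap.mulRight (AddMonoidAlgebra ℤ Γ) (T x))
        = Finsupp.lmapDomain (AddMonoidAlgebra ℤ Γ) (AddMonoidAlgebra ℤ Γ) (· * x)
            ∘ₗ T.repr.toLinearMap := by
      apply T.ext
      intro w
      simp [LinearMap.mulRight_apply, hrx w, Finsupp.mapDomain_single]
    have hrepr : T.repr (h * T x) = Finsupp.mapDomain (· * x) (T.repr h) :=
      DFunLike.congr_fun hL h
    intro v γ hγ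
    have hv : v = v * x⁻¹ * x := by group
    rw [hrepr, hv, Finsupp.mapDomain_apply (mul_left_injective x)] at hγ
    exact hh _ _ hγ
  intro x hx w
  obtain ⟨hbx, hlx, hrx⟩ := key x hx
  have hCx : C x = T x := by
    refine (hCuniq x (T x) hbx ?_).symm
    intro v γ hγ
    rw [sub_self] at hγ
    simp at hγ
  refine ⟨hCx, ?_, ?_⟩
  · refine (hCuniq (x * w) (T x * C w) ?_ ?_).symm
    · rw [hbarmul, hbx, (hC w).1]
    · have e : T x * C w - T (x * w) = T x * (C w - T w) := by
        rw [mul_sub, hlx w]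
      rw [e]
      exact negL x hlx _ (hC w).2
  · refine (hCuniq (w * x) (C w * T x) ?_ ?_).symm
    · rw [hbarmul, hbx, (hC w).1]
    · have e : C w * T x - T (w * x) = (C w - T w) * T x := by
        rw [sub_mul, hrx w]
      rw [e]
      exact negR x hrx _ (hC w).2
end
end
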